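/- For every graph G without isolated vertices, the induced matching number of the 1-subdivision graph S(G) equals |V(G)| − γ(G), where γ(G) is the domination number of G. -/

import Mathlib

open SimpleGraph CategoryTheory

namespace Paper

variable {V : Type} {W : Type}

/-- The 1-subdivision of a graph `G`: each edge is replaced by a path of
length two, by inserting a new vertex (the edge itself) on every edge. -/
def subdiv (G : SimpleGraph V) : SimpleGraph (V ⊕ G.edgeSet) where
  Adj x y :=
    match x, y with
    | Sum.inl v, Sum.inr e => v ∈ (e : Sym2 V)
    | Sum.inr e, Sum.inl v => v ∈ (e : Sym2 V)
    | _, _ => False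
  symm := by
    constructor
    rintro (v | e) (w | f) h
    · exact h.elim
    · exact h
    · exact h
    · exact h.elim
  loopless := by constructor; rintro (v | e) h <;> exact h.elim

/-- The geometric realization of the independence complex of a graph:
convex combinations of vertices whose support is an independent set. -/
def indRealization (G : SimpleGraph V) : Type :=
  {f : V → ℝ // (∀ v, 0 ≤ f v) ∧ (∑ᶠ v, f v) = 1 ∧
     ∀ u v, f u ≠ 0 → f v ≠ 0 → ¬ G.Adj u v}

instance (G : SimpleGraph V) : TopologicalSpace (indRealization G) := by
  delta indRealization; infer_instance

/-- The singular chain complex of a space, with rational coefficients. -/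
noncomputable def singularChains (X : Type) [TopologicalSpace X] :
    ChainComplex (ModuleCat ℚ) ℕ :=
  (AlgebraicTopology.alternatingFaceMapComplex (ModuleCat ℚ)).obj
    (((SimplicialObject.whiskering _ _).obj (ModuleCat.free ℚ)).obj
      (TopCat.toSSet.obj (TopCat.of X)))

/-- Nontriviality of the `n`-th singular homology with rational coefficients. -/
def homologyNontrivial (X : Type) [TopologicalSpace X] (n : ℕ) : Prop :=
  Nontrivial ((singularChains X).homology n)

/-- Nontriviality of the reduced singular homology (rational coefficients)
in degree `n : ℤ`. -/
def reducedHomologyNontrivial (X : Type) [TopologicalSpace X] : ℤ → Prop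
  | Int.negSucc 0 => IsEmpty X
  | Int.negSucc (_ + 1) => False
  | Int.ofNat 0 => ∃ x y : X, ¬ Joined x y
  | Int.ofNat (n + 1) => homologyNontrivial X (n + 1)

/-- The Castelnuovo–Mumford regularity of a graph: the largest `j` such that
some induced subcomplex of the independence complex has nontrivial reduced
homology in dimension `j - 1`. -/
noncomputable def greg {V : Type} (G : SimpleGraph V) : ℕ :=
  sSup { j : ℕ |
    ∃ S : Set V, reducedHomologyNontrivial (indRealization (G.induce S)) ((j : ℤ) - 1) }

/-- `X, Y : Fin k → Finset V` describe a partition of the vertex set of `G`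
into `k` (not necessarily induced) bicliques with sides `X i` and `Y i`. -/
def IsBicliquePartition (G : SimpleGraph V) (k : ℕ) (X Y : Fin k → Finset V) : Prop :=
  (∀ i, (X i).Nonempty) ∧ (∀ i, Disjoint (X i) (Y i)) ∧
  (∀ i, ∀ x ∈ X i, ∀ y ∈ Y i, G.Adj x y) ∧
  (∀ v : V, ∃! i : Fin k, v ∈ X i ∨ v ∈ Y i)

/-- The biclique vertex partition number `bp G`. -/
noncomputable def bp (G : SimpleGraph V) : ℕ :=
  sInf { k | ∃ X Y : Fin k → Finset V, IsBicliquePartition G k X Y }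

/-- `γ(A, G)`: the least size of a vertex set dominating `A`. -/
noncomputable def domNum (G : SimpleGraph V) (A : Set V) : ℕ :=
  sInf { n | ∃ D : Finset V, D.card = n ∧ ∀ a ∈ A, ∃ d ∈ D, d = a ∨ G.Adj d a }

/-- The domination number `γ(G)`. -/
noncomputable def gamma (G : SimpleGraph V) : ℕ := domNum G Set.univ

/-- The independence domination number `γ^i(G)`: the maximum of `γ(I, G)` over
independent sets `I` consisting of non-isolated vertices. -/
noncomputable def iDom (G : SimpleGraph V) : ℕ :=
  sSup { n | ∃ I : Set V, (∀ v ∈ I, ∃ w, G.Adj v w) ∧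
      (∀ u ∈ I, ∀ v ∈ I, ¬ G.Adj u v) ∧ n = domNum G I }

/-- `M` is an induced matching of `G`. -/
def IsInducedMatching (G : SimpleGraph V) (M : Finset (Sym2 V)) : Prop :=
  ((M : Set (Sym2 V)) ⊆ G.edgeSet) ∧
  ∀ e ∈ M, ∀ f ∈ M, e ≠ f → ∀ u ∈ e, ∀ v ∈ f, u ≠ v ∧ ¬ G.Adj u v

/-- The induced matching number of `G`. -/
noncomputable def imNum (G : SimpleGraph V) : ℕ :=
  sSup { n | ∃ M : Finset (Sym2 V), IsInducedMatching G M ∧ M.card = n }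

/-- A simple vertex: the neighborhoods of its neighbors are linearly
ordered by inclusion. -/
def IsSimpleVertex (G : SimpleGraph V) (x : V) : Prop :=
  ∀ u v : V, G.Adj x u → G.Adj x v →
    G.neighborSet u ⊆ G.neighborSet v ∨ G.neighborSet v ⊆ G.neighborSet u

/-- A bisimplicial edge `uv`: every vertex of `N(u) \ {v}` is adjacent to
every vertex of `N(v) \ {u}`, i.e. `N[e]` induces a complete bipartite graph. -/
def IsBisimplicialEdge (G : SimpleGraph V) (u v : V) : Prop :=
  G.Adj u v ∧ ∀ a b : V, G.Adj u a → a ≠ v → G.Adj v b → b ≠ u → G.Adj a b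

/-- A chordal bipartite graph: bipartite with no induced cycle of length
greater than four. -/
def ChordalBipartite (G : SimpleGraph V) : Prop :=
  G.Colorable 2 ∧ ∀ n : ℕ, 4 < n → IsEmpty (cycleGraph n ↪g G)

/-- Attach a pendant vertex (whisker) `w : W` at the vertex `φ w` for each `w`. -/
def addPendants (G : SimpleGraph V) (φ : W → V) : SimpleGraph (V ⊕ W) where
  Adj x y :=
    match x, y with
    | Sum.inl a, Sum.inl b => G.Adj a b
    | Sum.inl a, Sum.inr w => a = φ w
    | Sum.inr w, Sum.inl a => a = φ w
    | Sum.inr _, Sum.inr _ => False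
  symm := by
    constructor
    rintro (a | w) (b | x) h
    · exact h.symm
    · exact h
    · exact h
    · exact h.elim
  loopless := by
    constructor
    rintro (a | w) h
    · exact G.irrefl h
    · exact h.elim

/-- The closed neighborhood, inside the vertex set `Ws`, of the edge `uv`. -/
def closedEdgeNbhdOn (G : SimpleGraph V) (Ws : Set V) (u v : V) : Set V :=
  {w ∈ Ws | w = u ∨ w = v ∨ G.Adj u w ∨ G.Adj v w}

/-- The vertex sets `B_i` remaining after successively removing the closed
neighborhoods of the edges `e 0, e 1, …`. -/
def remSet (G : SimpleGraph V) (e : ℕ → V × V) : ℕ → Set V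
  | 0 => Set.univ
  | i + 1 => remSet G e i \ closedEdgeNbhdOn G (remSet G e i) (e i).1 (e i).2

/-- A simple vertex of the subgraph induced on `Ws`. -/
def SimpleVertexOn (G : SimpleGraph V) (Ws : Set V) (x : V) : Prop :=
  x ∈ Ws ∧ ∀ u ∈ Ws, ∀ v ∈ Ws, G.Adj x u → G.Adj x v →
    ({a ∈ Ws | G.Adj u a} ⊆ {a ∈ Ws | G.Adj v a} ∨
     {a ∈ Ws | G.Adj v a} ⊆ {a ∈ Ws | G.Adj u a})

/-- A bisimplicial edge of the subgraph induced on `Ws`. -/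
def BisimplicialOn (G : SimpleGraph V) (Ws : Set V) (u v : V) : Prop :=
  u ∈ Ws ∧ v ∈ Ws ∧ G.Adj u v ∧
    ∀ a ∈ Ws, ∀ b ∈ Ws, G.Adj u a → a ≠ v → G.Adj v b → b ≠ u → G.Adj a b

/-- `e 0, …, e (k-1)` is a biclique elimination sequence for `G`. -/
def IsBES (G : SimpleGraph V) (k : ℕ) (e : ℕ → V × V) : Prop :=
  (∀ i < k, BisimplicialOn G (remSet G e i) (e i).1 (e i).2) ∧
  ∀ u ∈ remSet G e k, ∀ v ∈ remSet G e k, ¬ G.Adj u v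

/-- A simple biclique elimination sequence. -/
def IsSimpleBES (G : SimpleGraph V) (k : ℕ) (e : ℕ → V × V) : Prop :=
  IsBES G k e ∧
  ∀ i < k, SimpleVertexOn G (remSet G e i) (e i).1 ∨
           SimpleVertexOn G (remSet G e i) (e i).2

/-- A complete simple biclique elimination sequence: no deletion step ever
leaves an isolated vertex behind. -/
def IsCompleteSBES (G : SimpleGraph V) (k : ℕ) (e : ℕ → V × V) : Prop :=
  IsSimpleBES G k e ∧
  ∀ i < k, ∀ w ∈ remSet G e (i + 1), ∃ w' ∈ remSet G e (i + 1), G.Adj w w'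

/-- `v` is covered by (incident to) an edge of `M`. -/
def coveredBy (M : Finset (Sym2 V)) (v : V) : Prop := ∃ e ∈ M, v ∈ e

/-- The class `Γ`: connected bipartite graphs of minimum degree at least two,
with an induced matching `M` with `|M| > |V|/3` such that every uncovered
vertex is adjacent to endpoints of at least two distinct edges of `M`. -/
def InGamma (G : SimpleGraph V) (M : Finset (Sym2 V)) : Prop :=
  G.Colorable 2 ∧ G.Connected ∧
  (∀ v : V, ∃ w w' : V, w ≠ w' ∧ G.Adj v w ∧ G.Adj v w') ∧
  IsInducedMatching G M ∧
  3 * M.card > Nat.card V ∧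
  (∀ v : V, ¬ coveredBy M v →
    ∃ e ∈ M, ∃ f ∈ M, e ≠ f ∧ (∃ x ∈ e, G.Adj v x) ∧ (∃ y ∈ f, G.Adj v y))

lemma subdiv_edge_form {G : SimpleGraph V} {e : Sym2 (V ⊕ G.edgeSet)}
    (he : e ∈ (subdiv G).edgeSet) :
    ∃ v ε, e = s(Sum.inl v, Sum.inr ε) ∧ v ∈ (ε : Sym2 V) := by
  induction e using Sym2.ind with
  | _ x y =>
    rw [SimpleGraph.mem_edgeSet] at he
    rcases x with v | ε <;> rcases y with w | δ
    · exact he.elim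
    · exact ⟨v, δ, rfl, he⟩
    · exact ⟨w, ε, Sym2.eq_swap, he⟩
    · exact he.elim

lemma upper_bound {V : Type} [Fintype V] (G : SimpleGraph V)
    (M : Finset (Sym2 (V ⊕ G.edgeSet))) (hM : IsInducedMatching (subdiv G) M) :
    M.card + gamma G ≤ Fintype.card V := by
  classical
  by_cases hV : Nonempty V
  case neg =>
    have hM0 : M = ∅ := by
      rcases Finset.eq_empty_or_nonempty M with h | ⟨e, he⟩
      · exact h
      · obtain ⟨v, _, _, _⟩ := subdiv_edge_form (hM.1 he)
        exact absurd ⟨v⟩ hV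
    have hγ : gamma G ≤ 0 := by
      unfold gamma domNum
      exact Nat.sInf_le ⟨∅, Finset.card_empty, fun a _ => absurd ⟨a⟩ hV⟩
    simp [hM0]
    omega
  case pos =>
    haveI := hV
    set vfun : Sym2 (V ⊕ G.edgeSet) → V := fun e =>
      if h : ∃ v : V, Sum.inl v ∈ e then h.choose else Classical.arbitrary V
      with hvfun
    have key : ∀ e ∈ M, ∃ ε : G.edgeSet,
        Sum.inl (vfun e) ∈ e ∧ Sum.inr ε ∈ e ∧ vfun e ∈ (ε : Sym2 V) ∧
          e = s(Sum.inl (vfun e), Sum.inr ε) := by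
      intro e he
      obtain ⟨v, ε, rfl, hv⟩ := subdiv_edge_form (hM.1 he)
      have hex : ∃ w : V, Sum.inl w ∈ s(Sum.inl v, Sum.inr ε) :=
        ⟨v, Sym2.mem_mk_left _ _⟩
      have hvf : vfun s(Sum.inl v, Sum.inr ε) = v := by
        rw [hvfun]
        simp only [dif_pos hex]
        have h2 := hex.choose_spec
        rw [Sym2.mem_iff] at h2
        rcases h2 with h1 | h1
        · exact Sum.inl.inj h1
        · exact absurd h1 (by simp)
      rw [hvf]
      exact ⟨ε, Sym2.mem_mk_left _ _, Sym2.mem_mk_right _ _, hv, rfl⟩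
    have hinj : Set.InjOn vfun M := by
      intro e he f hf hef
      by_contra hne
      obtain ⟨εe, he1, _, _, _⟩ := key e he
      obtain ⟨εf, hf1, _, _, _⟩ := key f hf
      have h2 := (hM.2 e he f hf hne (Sum.inl (vfun e)) he1
        (Sum.inl (vfun f)) hf1).1
      rw [hef] at h2
      exact h2 rfl
    set A : Finset V := M.image vfun with hAdef
    have hA : A.card = M.card := Finset.card_image_of_injOn hinj
    have hdomA : ∀ a ∈ (Set.univ : Set V), ∃ d ∈ Aᶜ, d = a ∨ G.Adj d a := by
      intro a _
      by_cases ha : a ∈ A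
      case neg => exact ⟨a, Finset.mem_compl.2 ha, Or.inl rfl⟩
      case pos =>
        obtain ⟨e, he, hve⟩ := Finset.mem_image.1 ha
        obtain ⟨ε, hmA, hmE, hmem, he1⟩ := key e he
        rw [hve] at he1 hmem hmA
        obtain ⟨u, hu⟩ := Sym2.mem_iff_exists.1 hmem
        have hadj : G.Adj a u := G.mem_edgeSet.1 (hu ▸ ε.2)
        have huA : u ∉ A := by
          intro huA
          obtain ⟨f, hf, hvf⟩ := Finset.mem_image.1 huA
          obtain ⟨δ, hfA, hfE, _, hf1⟩ := key f hf
          rw [hvf] at hf1 hfA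
          by_cases hef : f = e
          · rw [hef, he1] at hf1
            rw [Sym2.eq_iff] at hf1
            rcases hf1 with ⟨h1, _⟩ | ⟨h1, _⟩
            · exact hadj.ne (Sum.inl.inj h1)
            · exact absurd h1 (by simp)
          · have h2 := (hM.2 e he f hf (fun hq => hef hq.symm)
              (Sum.inr ε) hmE (Sum.inl u) hfA).2
            exact h2 (show u ∈ (ε : Sym2 V) from hu ▸ Sym2.mem_mk_right _ _)
        exact ⟨u, Finset.mem_compl.2 huA, Or.inr hadj.symm⟩
    have hγ : gamma G ≤ Fintype.card V - M.card := by
      unfold gamma domNum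
      refine le_trans (Nat.sInf_le ⟨Aᶜ, rfl, hdomA⟩) ?_
      rw [Finset.card_compl, hA]
    have hle : M.card ≤ Fintype.card V := hA ▸ Finset.card_le_univ A
    omega

lemma lower_bound {V : Type} [Fintype V] (G : SimpleGraph V)
    (h : ∀ v : V, ∃ w : V, G.Adj v w) (D : Finset V)
    (hdom : ∀ a ∈ (Set.univ : Set V), ∃ d ∈ D, d = a ∨ G.Adj d a) :
    ∃ M : Finset (Sym2 (V ⊕ G.edgeSet)), IsInducedMatching (subdiv G) M ∧
      M.card = Fintype.card V - D.card := by
  classical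
  have hx : ∀ a : V, ∃ d : V, G.Adj d a ∧ (a ∉ D → d ∈ D) := by
    intro a
    by_cases ha : a ∈ D
    · obtain ⟨w, hw⟩ := h a
      exact ⟨w, hw.symm, fun h' => absurd ha h'⟩
    · obtain ⟨d, hd, hda⟩ := hdom a (Set.mem_univ a)
      rcases hda with rfl | hda
      · exact absurd hd ha
      · exact ⟨d, hda, fun _ => hd⟩
  choose f hadj hmem using hx
  set ε : V → G.edgeSet := fun a => ⟨s(f a, a), G.mem_edgeSet.2 (hadj a)⟩
    with hεdef
  have hεmem : ∀ a, (ε a : Sym2 V) = s(f a, a) := fun a => rfl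
  refine ⟨Dᶜ.image (fun a => s(Sum.inl a, Sum.inr (ε a))), ⟨?_, ?_⟩, ?_⟩
  · intro e he
    simp only [Finset.coe_image, Set.mem_image, Finset.mem_coe] at he
    obtain ⟨a, _, rfl⟩ := he
    exact (show a ∈ (ε a : Sym2 V) from Sym2.mem_mk_right _ _)
  · intro e he f' hf' hne u hu v hv
    obtain ⟨a, ha, rfl⟩ := Finset.mem_image.1 he
    obtain ⟨b, hb, rfl⟩ := Finset.mem_image.1 hf'
    have ha' : a ∉ D := Finset.mem_compl.1 ha
    have hb' : b ∉ D := Finset.mem_compl.1 hb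
    have hab : a ≠ b := fun hq => hne (by rw [hq])
    rw [Sym2.mem_iff] at hu hv
    rcases hu with rfl | rfl <;> rcases hv with rfl | rfl
    · exact ⟨by simpa using hab, fun h' => h'⟩
    · refine ⟨by simp, fun h' => ?_⟩
      have h2 : a ∈ (ε b : Sym2 V) := h'
      rw [hεmem, Sym2.mem_iff] at h2
      rcases h2 with rfl | rfl
      · exact ha' (hmem b hb')
      · exact hab rfl
    · refine ⟨by simp, fun h' => ?_⟩
      have h2 : b ∈ (ε a : Sym2 V) := h'
      rw [hεmem, Sym2.mem_iff] at h2
      rcases h2 with rfl | rfl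
      · exact hb' (hmem a ha')
      · exact hab rfl
    · refine ⟨?_, fun h' => h'⟩
      intro hq
      have h2 : ε a = ε b := Sum.inr.inj hq
      have h3 : s(f a, a) = s(f b, b) := by
        rw [← hεmem, ← hεmem, h2]
      rw [Sym2.eq_iff] at h3
      rcases h3 with ⟨_, h4⟩ | ⟨h4, h5⟩
      · exact hab h4
      · exact ha' (h5 ▸ hmem b hb')
  · rw [Finset.card_image_of_injOn, Finset.card_compl]
    intro a _ b _ hq
    rw [Sym2.eq_iff] at hq
    rcases hq with ⟨h1, _⟩ | ⟨h1, _⟩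
    · exact Sum.inl.inj h1
    · exact absurd h1 (by simp)

/-- For a graph without isolated vertices,
`im(S(G)) = |V(G)| - γ(G)`. -/
theorem imNum_subdiv_eq_card_sub_gamma {V : Type} [Fintype V]
    (G : SimpleGraph V) (h : ∀ v : V, ∃ w : V, G.Adj v w) :
    imNum (subdiv G) = Fintype.card V - gamma G := by
  classical
  have hγset : (Finset.univ : Finset V).card ∈
      {n | ∃ D : Finset V, D.card = n ∧
        ∀ a ∈ (Set.univ : Set V), ∃ d ∈ D, d = a ∨ G.Adj d a} :=
    ⟨Finset.univ, rfl, fun a _ => ⟨a, Finset.mem_univ a, Or.inl rfl⟩⟩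
  have hγle : gamma G ≤ Fintype.card V := by
    unfold gamma domNum
    simpa using Nat.sInf_le hγset
  have hmem : gamma G ∈ {n | ∃ D : Finset V, D.card = n ∧
      ∀ a ∈ (Set.univ : Set V), ∃ d ∈ D, d = a ∨ G.Adj d a} := by
    unfold gamma domNum
    exact Nat.sInf_mem ⟨_, hγset⟩
  obtain ⟨D, hDcard, hDdom⟩ := hmem
  obtain ⟨M, hMmatch, hMcard⟩ := lower_bound G h D hDdom
  have hub : ∀ m ∈ {n | ∃ M : Finset (Sym2 (V ⊕ G.edgeSet)),
      IsInducedMatching (subdiv G) M ∧ M.card = n}, m ≤ Fintype.card V - gamma G := by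
    rintro m ⟨M', hM', rfl⟩
    have := upper_bound G M' hM'
    omega
  unfold imNum
  apply le_antisymm
  · refine csSup_le ⟨0, ∅, ⟨?_, ?_⟩, rfl⟩ hub
    · simp
    · simp
  · refine le_csSup ⟨_, hub⟩ ?_
    exact ⟨M, hMmatch, by rw [hMcard, hDcard]⟩

end Paper
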